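/- A function u : ℝⁿ → ℝ is differentiable with λ-Lipschitz gradient (i.e. u ∈ C^{1,1} with Lipschitz constant λ for Du) if and only if both u + (λ/2)|·|² and −u + (λ/2)|·|² are convex, i.e. both u and −u are λ-quasi-convex. -/

import Mathlib

open scoped RealInnerProductSpace
open Set

section Aux

variable {E : Type*} [NormedAddCommGroup E] [InnerProductSpace ℝ E]

/-- A differentiable-free first-order condition implies convexity. -/
theorem aux_convexOn_of_tangent (F : E → ℝ) (P : E → E)
    (h : ∀ a b : E, F a + ⟪P a, b - a⟫ ≤ F b) : ConvexOn ℝ univ F := by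
  refine ⟨convex_univ, fun y _ z _ a b ha hb hab => ?_⟩
  set m := a • y + b • z with hm
  have h1 := h m y
  have h2 := h m z
  have hzero : a • (y - m) + b • (z - m) = 0 := by
    have hh : a • (y - m) + b • (z - m) = (a • y + b • z) - (a + b) • m := by module
    rw [hh, hab, one_smul, hm, sub_self]
  have hin : a * ⟪P m, y - m⟫ + b * ⟪P m, z - m⟫ = 0 := by
    rw [← real_inner_smul_right, ← real_inner_smul_right, ← inner_add_right, hzero,
      inner_zero_right]
  have ha1 := mul_le_mul_of_nonneg_left h1 ha
  have hb1 := mul_le_mul_of_nonneg_left h2 hb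
  rw [mul_add] at ha1 hb1
  have hsum : a * F m + b * F m = F m := by rw [← add_mul, hab, one_mul]
  simp only [smul_eq_mul]
  linarith

theorem aux_convexOn_smul_normsq (c : ℝ) (hc : 0 ≤ c) :
    ConvexOn ℝ univ (fun y : E => c * ‖y‖ ^ 2) := by
  refine ⟨convex_univ, fun y _ z _ a b ha hb hab => ?_⟩
  simp only [smul_eq_mul]
  have hexp : ‖a • y + b • z‖ ^ 2
      = a^2*‖y‖^2 + 2*(a*b*⟪y,z⟫) + b^2*‖z‖^2 := by
    rw [norm_add_sq_real, real_inner_smul_left, real_inner_smul_right, norm_smul, norm_smul,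
      mul_pow, mul_pow, Real.norm_eq_abs, Real.norm_eq_abs, sq_abs, sq_abs]
    ring
  have key : ‖a • y + b • z‖ ^ 2 ≤ a * ‖y‖^2 + b * ‖z‖^2 := by
    rw [hexp]
    nlinarith [real_inner_le_norm y z, mul_nonneg (mul_nonneg ha hb) (sq_nonneg (‖y‖ - ‖z‖)),
      mul_nonneg ha hb, norm_nonneg y, norm_nonneg z]
  calc c * ‖a • y + b • z‖ ^ 2 ≤ c * (a * ‖y‖^2 + b * ‖z‖^2) :=
        mul_le_mul_of_nonneg_left key hc
    _ = a * (c * ‖y‖^2) + b * (c * ‖z‖^2) := by ring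

theorem aux_line_convex {F : E → ℝ} (hF : ConvexOn ℝ univ F) (x v : E) :
    ConvexOn ℝ univ (fun t : ℝ => F (x + t • v)) := by
  refine ⟨convex_univ, fun s _ t _ a b ha hb hab => ?_⟩
  have key : x + (a * s + b * t) • v = a • (x + s • v) + b • (x + t • v) := by
    have h1 : a • (x + s • v) + b • (x + t • v) = (a + b) • x + (a * s + b * t) • v := by module
    rw [h1, hab, one_smul]
  simp only [smul_eq_mul]
  rw [key]
  simpa using hF.2 (mem_univ (x + s • v)) (mem_univ (x + t • v)) ha hb hab

noncomputable def slF (F : E → ℝ) (x v : E) (t : ℝ) : ℝ := (F (x + t • v) - F x) / t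

noncomputable def DF (F : E → ℝ) (x v : E) : ℝ := sInf (slF F x v '' Set.Ioi 0)

theorem slF_mono {F : E → ℝ} (hF : ConvexOn ℝ univ F) (x v : E) {s t : ℝ}
    (hs : s ≠ 0) (ht : t ≠ 0) (hst : s ≤ t) : slF F x v s ≤ slF F x v t := by
  have h := (aux_line_convex hF x v).slope_mono (mem_univ (0:ℝ))
  have h2 := h (show s ∈ univ \ {0} by simp [hs]) (show t ∈ univ \ {0} by simp [ht]) hst
  simpa [slope_def_field, slF, zero_smul] using h2

theorem slF_bdd {F : E → ℝ} (hF : ConvexOn ℝ univ F) (x v : E) :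
    BddBelow (slF F x v '' Ioi 0) := by
  refine ⟨slF F x v (-1), ?_⟩
  rintro _ ⟨t, ht, rfl⟩
  exact slF_mono hF x v (by norm_num) (ne_of_gt (mem_Ioi.mp ht))
    (by linarith [mem_Ioi.mp ht])

theorem DF_le {F : E → ℝ} (hF : ConvexOn ℝ univ F) (x v : E) {t : ℝ} (ht : 0 < t) :
    DF F x v ≤ slF F x v t :=
  csInf_le (slF_bdd hF x v) (mem_image_of_mem _ ht)

theorem le_DF {F : E → ℝ} (x v : E) {c : ℝ} (h : ∀ t, 0 < t → c ≤ slF F x v t) :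
    c ≤ DF F x v := by
  refine le_csInf ⟨slF F x v 1, mem_image_of_mem _ (mem_Ioi.mpr one_pos)⟩ ?_
  rintro _ ⟨t, ht, rfl⟩
  exact h t (mem_Ioi.mp ht)

theorem DF_le_sub {F : E → ℝ} (hF : ConvexOn ℝ univ F) (x v : E) :
    DF F x v ≤ F (x + v) - F x := by
  have := DF_le hF x v one_pos
  simpa [slF] using this

theorem le_add_DF {F G : E → ℝ} (x : E) {v w : E} {I : ℝ}
    (h : ∀ s t, 0 < s → 0 < t → I ≤ slF F x v s + slF G x w t) :
    I ≤ DF F x v + DF G x w := by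
  have h1 : ∀ t, 0 < t → I - slF G x w t ≤ DF F x v := by
    intro t ht
    exact le_DF x v (fun s hs => by linarith [h s t hs ht])
  have h2 : I - DF F x v ≤ DF G x w :=
    le_DF x w (fun t ht => by linarith [h1 t ht])
  linarith

theorem slF_add (μ : ℝ) {F G : E → ℝ} (hfg : ∀ y, F y + G y = μ * ‖y‖^2) (x v : E) {t : ℝ}
    (ht : t ≠ 0) : slF F x v t + slF G x v t = 2*μ*⟪x,v⟫ + t*(μ*‖v‖^2) := by
  simp only [slF]
  have h1 : ‖x + t • v‖^2 = ‖x‖^2 + 2*(t*⟪x,v⟫) + t^2*‖v‖^2 := by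
    rw [norm_add_sq_real, real_inner_smul_right, norm_smul, mul_pow, Real.norm_eq_abs, sq_abs]
  have h2 := hfg (x + t • v)
  have h3 := hfg x
  rw [← add_div, show F (x + t • v) - F x + (G (x + t • v) - G x)
      = μ * ‖x + t • v‖^2 - μ * ‖x‖^2 by linarith, h1]
  field_simp
  ring

theorem DF_add_DG (μ : ℝ) (hμ : 0 ≤ μ) {F G : E → ℝ} (hF : ConvexOn ℝ univ F)
    (hG : ConvexOn ℝ univ G) (hfg : ∀ y, F y + G y = μ * ‖y‖^2) (x v : E) :
    DF F x v + DF G x v = 2*μ*⟪x,v⟫ := by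
  have hnn : 0 ≤ μ * ‖v‖^2 := by positivity
  apply le_antisymm
  · refine le_of_forall_pos_le_add ?_
    intro ε hε
    set t : ℝ := ε / (μ*‖v‖^2 + 1) with htdef
    have ht : 0 < t := by positivity
    have h1 := DF_le hF x v ht
    have h2 := DF_le hG x v ht
    have h3 := slF_add μ hfg x v (ne_of_gt ht)
    have h4 : t * (μ*‖v‖^2) ≤ ε := by
      rw [htdef, div_mul_eq_mul_div, div_le_iff₀ (by positivity)]
      nlinarith
    linarith
  · refine le_add_DF x ?_
    intro s t hs ht
    set r := min s t with hr
    have hr0 : 0 < r := lt_min hs ht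
    have h1 := slF_mono hF x v (ne_of_gt hr0) (ne_of_gt hs) (min_le_left s t)
    have h2 := slF_mono hG x v (ne_of_gt hr0) (ne_of_gt ht) (min_le_right s t)
    have h3 := slF_add μ hfg x v (ne_of_gt hr0)
    nlinarith [mul_nonneg hr0.le hnn]

theorem slF_half {F : E → ℝ} (hF : ConvexOn ℝ univ F) (x v w : E) {r : ℝ} (hr : 0 < r) :
    slF F x (v + w) (r/2) ≤ slF F x v r + slF F x w r := by
  have hc := hF.2 (mem_univ (x + r • v)) (mem_univ (x + r • w))
    (by norm_num : (0:ℝ) ≤ 1/2) (by norm_num : (0:ℝ) ≤ 1/2) (by norm_num)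
  have hmid : (1/2 : ℝ) • (x + r • v) + (1/2 : ℝ) • (x + r • w) = x + (r/2) • (v + w) := by
    module
  rw [hmid] at hc
  simp only [smul_eq_mul] at hc
  simp only [slF, ← add_div]
  rw [div_le_div_iff₀ (by positivity) hr]
  nlinarith

theorem DF_subadd {F : E → ℝ} (hF : ConvexOn ℝ univ F) (x v w : E) :
    DF F x (v + w) ≤ DF F x v + DF F x w := by
  refine le_add_DF x ?_
  intro s t hs ht
  set r := min s t with hr
  have hr0 : 0 < r := lt_min hs ht
  calc DF F x (v + w) ≤ slF F x (v + w) (r/2) := DF_le hF x _ (by positivity)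
    _ ≤ slF F x v r + slF F x w r := slF_half hF x v w hr0
    _ ≤ slF F x v s + slF F x w t := by
        have h1 := slF_mono hF x v (ne_of_gt hr0) (ne_of_gt hs) (min_le_left s t)
        have h2 := slF_mono hF x w (ne_of_gt hr0) (ne_of_gt ht) (min_le_right s t)
        linarith

theorem DF_zero (F : E → ℝ) (x : E) : DF F x 0 = 0 := by
  have himg : slF F x 0 '' Ioi 0 = {0} := by
    rw [show slF F x (0:E) = fun _ => (0:ℝ) from funext fun t => by simp [slF]]
    exact Set.Nonempty.image_const (nonempty_Ioi (a := (0:ℝ))) 0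
  rw [DF, himg, csInf_singleton]

theorem DF_smul_pos {F : E → ℝ} (hF : ConvexOn ℝ univ F) (x v : E) (c : ℝ) (hc : 0 < c) :
    DF F x (c • v) = c * DF F x v := by
  have key : ∀ t : ℝ, t ≠ 0 → slF F x (c • v) t = c * slF F x v (c * t) := by
    intro t ht
    simp only [slF]
    rw [show t • (c • v) = (c * t) • v by rw [smul_smul, mul_comm]]
    field_simp
  apply le_antisymm
  · have h1 : (1/c) * DF F x (c • v) ≤ DF F x v := by
      refine le_DF x v ?_
      intro t ht
      have h2 := DF_le hF x (c • v) (show 0 < t/c by positivity)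
      rw [key (t/c) (by positivity), show c * (t/c) = t by field_simp] at h2
      calc (1/c) * DF F x (c • v) ≤ (1/c) * (c * slF F x v t) :=
            mul_le_mul_of_nonneg_left h2 (by positivity)
        _ = slF F x v t := by field_simp
    calc DF F x (c • v) = c * ((1/c) * DF F x (c • v)) := by field_simp
      _ ≤ c * DF F x v := mul_le_mul_of_nonneg_left h1 hc.le
  · refine le_DF x (c • v) ?_
    intro t ht
    rw [key t (ne_of_gt ht)]
    exact mul_le_mul_of_nonneg_left (DF_le hF x v (by positivity)) hc.le

theorem aux_subgrad [CompleteSpace E] [FiniteDimensional ℝ E] (μ : ℝ) (hμ : 0 ≤ μ)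
    (f g : E → ℝ) (hf : ConvexOn ℝ univ f) (hg : ConvexOn ℝ univ g)
    (hfg : ∀ y, f y + g y = μ * ‖y‖^2) (x : E) :
    ∃ p : E, (∀ v, ⟪p, v⟫ ≤ f (x + v) - f x) ∧
      (∀ v, f (x + v) - f x ≤ ⟪p, v⟫ + μ * ‖v‖^2) := by
  have hadd : ∀ v w, DF f x (v + w) = DF f x v + DF f x w := by
    intro v w
    have h1 := DF_subadd hf x v w
    have h2 := DF_subadd hg x v w
    have e1 := DF_add_DG μ hμ hf hg hfg x (v + w)
    have e2 := DF_add_DG μ hμ hf hg hfg x v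
    have e3 := DF_add_DG μ hμ hf hg hfg x w
    have e4 : ⟪x, v + w⟫ = ⟪x, v⟫ + ⟪x, w⟫ := inner_add_right x v w
    nlinarith
  have hneg : ∀ w, DF f x (-w) = - DF f x w := by
    intro w
    have h0 := hadd w (-w)
    rw [add_neg_cancel, DF_zero f x] at h0
    linarith
  have hsmul : ∀ (c : ℝ) (v : E), DF f x (c • v) = c * DF f x v := by
    intro c v
    rcases lt_trichotomy c 0 with hc | hc | hc
    · rw [show c • v = -((-c) • v) by module, hneg, DF_smul_pos hf x v (-c) (by linarith)]
      ring
    · rw [hc, zero_smul, DF_zero, zero_mul]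
    · exact DF_smul_pos hf x v c hc
  let L : E →ₗ[ℝ] ℝ := IsLinearMap.mk' (DF f x) ⟨hadd, fun c v => hsmul c v⟩
  refine ⟨(InnerProductSpace.toDual ℝ E).symm L.toContinuousLinearMap, ?_, ?_⟩
  all_goals
    have hp : ∀ v : E, ⟪(InnerProductSpace.toDual ℝ E).symm L.toContinuousLinearMap, v⟫
        = DF f x v := by
      intro v
      rw [InnerProductSpace.toDual_symm_apply]
      rfl
  · intro v
    rw [hp]
    exact DF_le_sub hf x v
  · intro v
    rw [hp]
    have h1 := DF_le_sub hg x v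
    have h2 := DF_add_DG μ hμ hf hg hfg x v
    have h3 := hfg (x + v)
    have h4 := hfg x
    have h5 : μ * ‖x + v‖^2 = μ * ‖x‖^2 + μ * (2 * ⟪x, v⟫) + μ * ‖v‖^2 := by
      rw [norm_add_sq_real]; ring
    linarith

theorem aux_hasGradientAt [CompleteSpace E] (F : E → ℝ) (x p : E) (c : ℝ)
    (h : ∀ v, |F (x + v) - F x - ⟪p, v⟫| ≤ c * ‖v‖^2) : HasGradientAt F p x := by
  rw [hasGradientAt_iff_isLittleO, Asymptotics.isLittleO_iff]
  intro ε hε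
  filter_upwards [Metric.ball_mem_nhds x (show 0 < ε / (|c| + 1) by positivity)] with y hy
  have hv := h (y - x)
  rw [show x + (y - x) = y by abel] at hv
  have hd : ‖y - x‖ < ε / (|c| + 1) := by rwa [Metric.mem_ball, dist_eq_norm] at hy
  have hd' : ‖y - x‖ * (|c| + 1) < ε := by
    rwa [lt_div_iff₀ (by positivity)] at hd
  rw [Real.norm_eq_abs]
  calc |F y - F x - ⟪p, y - x⟫| ≤ c * ‖y - x‖^2 := hv
    _ ≤ |c| * ‖y - x‖^2 := mul_le_mul_of_nonneg_right (le_abs_self c) (sq_nonneg _)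
    _ ≤ ε * ‖y - x‖ := by nlinarith [norm_nonneg (y - x), abs_nonneg c, sq_nonneg ‖y - x‖]

theorem aux_cocoercive (μ : ℝ) (hμ : 0 < μ) (F : E → ℝ) (P : E → E)
    (hlow : ∀ x v, ⟪P x, v⟫ ≤ F (x + v) - F x)
    (hup : ∀ x v, F (x + v) - F x ≤ ⟪P x, v⟫ + μ * ‖v‖^2)
    (x y : E) : ‖P x - P y‖^2 ≤ 2*μ*⟪P x - P y, x - y⟫ := by
  have key : ∀ a b : E, ‖P a - P b‖^2 ≤ 4*μ*(F a - F b - ⟪P b, a - b⟫) := by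
    intro a b
    set cc : ℝ := 1/(2*μ) with hcc
    set d : E := P b - P a with hdd
    have h1 := hlow b ((a + cc • d) - b)
    rw [show b + ((a + cc • d) - b) = a + cc • d by abel] at h1
    have h2 := hup a (cc • d)
    have hs1 : ⟪P b, (a + cc • d) - b⟫ = ⟪P b, a - b⟫ + ⟪P b, cc • d⟫ := by
      rw [show (a + cc • d) - b = (a - b) + cc • d by abel, inner_add_right]
    have hs2 : ⟪P b, cc • d⟫ - ⟪P a, cc • d⟫ = cc * ‖d‖^2 := by
      rw [← inner_sub_left, ← hdd, real_inner_smul_right, real_inner_self_eq_norm_sq]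
    have hs3 : ‖cc • d‖^2 = cc^2 * ‖d‖^2 := by
      rw [norm_smul, mul_pow, Real.norm_eq_abs, sq_abs]
    have hX : cc * ‖d‖^2 - μ * (cc^2 * ‖d‖^2) ≤ F a - F b - ⟪P b, a - b⟫ := by
      rw [hs3] at h2
      linarith
    have hrw : ‖P a - P b‖^2 = ‖d‖^2 := by rw [hdd, norm_sub_rev]
    have hfact : 4*μ*((cc - μ*cc^2) * ‖d‖^2) = ‖d‖^2 := by
      rw [hcc]; field_simp; ring
    calc ‖P a - P b‖^2 = 4*μ*((cc - μ*cc^2) * ‖d‖^2) := by rw [hrw, hfact]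
      _ ≤ 4*μ*(F a - F b - ⟪P b, a - b⟫) := by
          apply mul_le_mul_of_nonneg_left _ (by positivity)
          nlinarith
  have k1 := key x y
  have k2 := key y x
  have hrev : ‖P y - P x‖^2 = ‖P x - P y‖^2 := by rw [norm_sub_rev]
  have hi1 : ⟪P x, y - x⟫ = -⟪P x, x - y⟫ := by
    rw [show y - x = -(x - y) by abel, inner_neg_right]
  have hi2 : ⟪P x - P y, x - y⟫ = ⟪P x, x - y⟫ - ⟪P y, x - y⟫ := inner_sub_left _ _ _
  nlinarith

theorem aux_back [CompleteSpace E] [FiniteDimensional ℝ E] (μ : ℝ) (hμ : 0 < μ)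
    (u : E → ℝ) (hcf : ConvexOn ℝ univ (fun y : E => u y + μ/2 * ‖y‖^2))
    (hcg : ConvexOn ℝ univ (fun y : E => -u y + μ/2 * ‖y‖^2)) :
    Differentiable ℝ u ∧ ∀ x y : E, ‖gradient u x - gradient u y‖ ≤ μ * ‖x - y‖ := by
  have hfg : ∀ y : E, (u y + μ/2 * ‖y‖^2) + (-u y + μ/2 * ‖y‖^2) = μ * ‖y‖^2 := by
    intro y; ring
  have hex : ∀ x : E, ∃ p : E,
      (∀ v, ⟪p, v⟫ ≤ (u (x + v) + μ/2 * ‖x + v‖^2) - (u x + μ/2 * ‖x‖^2)) ∧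
      (∀ v, (u (x + v) + μ/2 * ‖x + v‖^2) - (u x + μ/2 * ‖x‖^2) ≤ ⟪p, v⟫ + μ * ‖v‖^2) := by
    intro x
    exact aux_subgrad μ hμ.le _ _ hcf hcg hfg x
  choose P hP1 hP2 using hex
  have hgradu : ∀ x : E, HasGradientAt u (P x - μ • x) x := by
    intro x
    apply aux_hasGradientAt u x _ (μ/2)
    intro v
    have h1 := hP1 x v
    have h2 := hP2 x v
    have h5 : μ/2 * ‖x + v‖^2 = μ/2 * ‖x‖^2 + μ * ⟪x, v⟫ + μ/2 * ‖v‖^2 := by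
      rw [norm_add_sq_real]; ring
    have hPin : ⟪P x - μ • x, v⟫ = ⟪P x, v⟫ - μ * ⟪x, v⟫ := by
      rw [inner_sub_left, real_inner_smul_left]
    rw [abs_le, hPin]
    constructor <;> linarith
  refine ⟨fun x => (hgradu x).differentiableAt, ?_⟩
  intro x y
  rw [(hgradu x).gradient, (hgradu y).gradient]
  have hco := aux_cocoercive μ hμ (fun y => u y + μ/2 * ‖y‖^2) P hP1 hP2 x y
  have hre : (P x - μ • x) - (P y - μ • y) = (P x - P y) - μ • (x - y) := by module
  rw [hre]
  have hnorm : ‖(P x - P y) - μ • (x - y)‖^2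
      = ‖P x - P y‖^2 - 2*(μ*⟪P x - P y, x - y⟫) + μ^2*‖x - y‖^2 := by
    rw [norm_sub_sq_real, real_inner_smul_right, norm_smul, mul_pow, Real.norm_eq_abs, sq_abs]
  have hsq : ‖(P x - P y) - μ • (x - y)‖^2 ≤ (μ * ‖x - y‖)^2 := by nlinarith
  exact (pow_le_pow_iff_left₀ (norm_nonneg _) (by positivity) two_ne_zero).mp hsq

theorem aux_taylor [CompleteSpace E] (lam : ℝ) (w : E → ℝ) (gw : E → E)
    (hw : ∀ z, HasGradientAt w (gw z) z) (hL : ∀ y z, ‖gw y - gw z‖ ≤ lam * ‖y - z‖)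
    (x v : E) : w (x + v) - w x - ⟪gw x, v⟫ ≤ lam/2 * ‖v‖^2 := by
  have hder : ∀ t : ℝ, HasDerivAt (fun r : ℝ => w (x + r • v)) ⟪gw (x + t • v), v⟫ t := by
    intro t
    have hc : HasDerivAt (fun r : ℝ => x + r • v) v t := by
      simpa using ((hasDerivAt_id t).smul_const v).const_add x
    have hu := (hasGradientAt_iff_hasFDerivAt.mp (hw (x + t • v))).comp_hasDerivAt t hc
    simpa [InnerProductSpace.toDual_apply_apply, Function.comp_def] using hu
  set φ : ℝ → ℝ := fun t => w (x + t • v) - t * ⟪gw x, v⟫ - lam/2 * t^2 * ‖v‖^2 with hφ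
  have hφd : ∀ t : ℝ, HasDerivAt φ (⟪gw (x + t • v), v⟫ - ⟪gw x, v⟫ - lam * t * ‖v‖^2) t := by
    intro t
    have h1 : HasDerivAt (fun r : ℝ => r * ⟪gw x, v⟫) ⟪gw x, v⟫ t := hasDerivAt_mul_const _
    have h2 : HasDerivAt (fun r : ℝ => lam/2 * r^2 * ‖v‖^2) (lam * t * ‖v‖^2) t := by
      have := ((hasDerivAt_pow 2 t).const_mul (lam/2)).mul_const (‖v‖^2)
      exact this.congr_deriv (by rw [show (2:ℕ) - 1 = 1 from rfl, pow_one]; ring)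
    exact ((hder t).sub h1).sub h2
  have hmono : AntitoneOn φ (Icc 0 1) := by
    apply antitoneOn_of_deriv_nonpos (convex_Icc 0 1)
    · exact (fun t _ => ((hφd t).differentiableAt).continuousAt.continuousWithinAt)
    · exact fun t _ => ((hφd t).differentiableAt).differentiableWithinAt
    · intro t ht
      rw [interior_Icc] at ht
      rw [(hφd t).deriv]
      have hCS : ⟪gw (x + t • v) - gw x, v⟫ ≤ ‖gw (x + t • v) - gw x‖ * ‖v‖ :=
        real_inner_le_norm _ _
      have hLip := hL (x + t • v) x
      rw [show x + t • v - x = t • v by abel, norm_smul, Real.norm_eq_abs,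
        abs_of_pos ht.1] at hLip
      have hin : ⟪gw (x + t • v) - gw x, v⟫ = ⟪gw (x + t • v), v⟫ - ⟪gw x, v⟫ :=
        inner_sub_left _ _ _
      nlinarith [norm_nonneg v, norm_nonneg (gw (x + t • v) - gw x)]
  have h01 := hmono (show (0:ℝ) ∈ Icc (0:ℝ) 1 by simp) (show (1:ℝ) ∈ Icc (0:ℝ) 1 by simp)
    zero_le_one
  simp only [hφ, one_smul, zero_smul, add_zero, one_pow, mul_one, zero_mul, mul_zero,
    sub_zero, zero_pow] at h01
  linarith [h01]

end Aux

theorem stmt_9 {n : ℕ} (u : EuclideanSpace ℝ (Fin n) → ℝ) (lam : ℝ) (hlam : 0 ≤ lam) :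
    (Differentiable ℝ u ∧
      ∀ x y : EuclideanSpace ℝ (Fin n),
        ‖gradient u x - gradient u y‖ ≤ lam * ‖x - y‖) ↔
    (ConvexOn ℝ Set.univ (fun x => u x + lam / 2 * ‖x‖ ^ 2) ∧
     ConvexOn ℝ Set.univ (fun x => -u x + lam / 2 * ‖x‖ ^ 2)) := by
  constructor
  · rintro ⟨hd, hL⟩
    have hgrad : ∀ z, HasGradientAt u (gradient u z) z := fun z => (hd z).hasGradientAt
    have hneg : ∀ z, HasGradientAt (fun y => -u y) (-gradient u z) z := by
      intro z
      have h := hasGradientAt_iff_hasFDerivAt.mp (hgrad z)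
      rw [hasGradientAt_iff_hasFDerivAt, map_neg]
      exact h.neg
    have hLneg : ∀ y z, ‖(-gradient u y) - (-gradient u z)‖ ≤ lam * ‖y - z‖ := by
      intro y z
      rw [show -gradient u y - -gradient u z = -(gradient u y - gradient u z) by abel, norm_neg]
      exact hL y z
    constructor
    · refine aux_convexOn_of_tangent _ (fun z => gradient u z + lam • z) ?_
      intro a b
      have hT := aux_taylor lam (fun y => -u y) (fun z => -gradient u z) hneg hLneg a (b - a)
      rw [show a + (b - a) = b by abel, inner_neg_left] at hT
      have h5 := norm_add_sq_real a (b - a)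
      rw [show a + (b - a) = b by abel] at h5
      have h6 : lam/2 * ‖b‖^2 = lam/2 * ‖a‖^2 + lam * ⟪a, b - a⟫ + lam/2 * ‖b - a‖^2 := by
        rw [h5]; ring
      have hPin : ⟪gradient u a + lam • a, b - a⟫ = ⟪gradient u a, b - a⟫ + lam * ⟪a, b - a⟫ := by
        rw [inner_add_left, real_inner_smul_left]
      rw [hPin]
      linarith
    · refine aux_convexOn_of_tangent _ (fun z => -gradient u z + lam • z) ?_
      intro a b
      have hT := aux_taylor lam u (gradient u) hgrad hL a (b - a)
      rw [show a + (b - a) = b by abel] at hT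
      have h5 := norm_add_sq_real a (b - a)
      rw [show a + (b - a) = b by abel] at h5
      have h6 : lam/2 * ‖b‖^2 = lam/2 * ‖a‖^2 + lam * ⟪a, b - a⟫ + lam/2 * ‖b - a‖^2 := by
        rw [h5]; ring
      have hPin : ⟪-gradient u a + lam • a, b - a⟫
          = -⟪gradient u a, b - a⟫ + lam * ⟪a, b - a⟫ := by
        rw [inner_add_left, real_inner_smul_left, inner_neg_left]
      rw [hPin]
      linarith
  · rintro ⟨hcf, hcg⟩
    have master : ∀ μ : ℝ, lam < μ → Differentiable ℝ u ∧
        ∀ x y : EuclideanSpace ℝ (Fin n),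
          ‖gradient u x - gradient u y‖ ≤ μ * ‖x - y‖ := by
      intro μ hμ
      have hμ0 : 0 < μ := lt_of_le_of_lt hlam hμ
      have hcfμ : ConvexOn ℝ Set.univ (fun y : EuclideanSpace ℝ (Fin n) =>
          u y + μ/2 * ‖y‖^2) := by
        have h := hcf.add (aux_convexOn_smul_normsq ((μ - lam)/2) (by linarith))
        have heq : (fun y : EuclideanSpace ℝ (Fin n) => u y + μ/2 * ‖y‖^2)
            = (fun x => u x + lam/2 * ‖x‖^2) + fun y => ((μ - lam)/2) * ‖y‖^2 := by
          funext y
          simp only [Pi.add_apply]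
          ring
        rw [heq]
        exact h
      have hcgμ : ConvexOn ℝ Set.univ (fun y : EuclideanSpace ℝ (Fin n) =>
          -u y + μ/2 * ‖y‖^2) := by
        have h := hcg.add (aux_convexOn_smul_normsq ((μ - lam)/2) (by linarith))
        have heq : (fun y : EuclideanSpace ℝ (Fin n) => -u y + μ/2 * ‖y‖^2)
            = (fun x => -u x + lam/2 * ‖x‖^2) + fun y => ((μ - lam)/2) * ‖y‖^2 := by
          funext y
          simp only [Pi.add_apply]
          ring
        rw [heq]
        exact h
      exact aux_back μ hμ0 u hcfμ hcgμ
    refine ⟨(master (lam + 1) (lt_add_one lam)).1, ?_⟩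
    intro x y
    refine le_of_forall_pos_le_add ?_
    intro ε hε
    have hpos : 0 < ‖x - y‖ + 1 := by positivity
    have h := (master (lam + ε/(‖x - y‖ + 1))
      (lt_add_of_pos_right lam (by positivity))).2 x y
    have hexp : (lam + ε/(‖x - y‖ + 1)) * ‖x - y‖
        = lam * ‖x - y‖ + ε/(‖x - y‖ + 1) * ‖x - y‖ := by ring
    have hsm : ε/(‖x - y‖ + 1) * ‖x - y‖ ≤ ε := by
      rw [div_mul_eq_mul_div, div_le_iff₀ hpos]
      nlinarith [norm_nonneg (x - y)]
    linarith
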